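/- Let S be a finite nonempty type, let γ be a real number with 0 < γ < 1, let r_max > 0 and set c = r_max/(1−γ). Let T and T̂ be row-stochastic matrices on S (the true and learned dynamics of a Markov chain on state–action pairs under a fixed policy), let r : S → ℝ satisfy |r x| ≤ r_max for all x, and let μ₀ be a probability vector on S. Let V be the value function of (T, r, γ) and assume |V x| ≤ c for all x. Let u, û : S → ℝ and ε_density ≥ 0 satisfy |u x − û x| ≤ ε_density for all x. Assume there exist C > 0 and ε_approx ≥ 0 such that for every x in S and every f : S → ℝ with |f y| ≤ 1 for all y, one has |∑_y (T̂ x y − T x y) · f y| ≤ C · (∑_y T̂ x y · u y) + ε_approx. Set λ = γ·c·C and define the regularized reward r̃ x = r x − λ · ∑_y T̂ x y · û y. Define the normalized returns η_M = (1−γ) · ∑'_{t≥0} γ^t · ∑_x (μ₀ᵀ T^t) x · r x and η_{M̃} = (1−γ) · ∑'_{t≥0} γ^t · ∑_x (μ₀ᵀ T̂^t) x · r̃ x, where μ₀ᵀ P^t denotes the row vector μ₀ multiplied by the t-th matrix power of P. Then η_M ≥ η_{M̃} − γ·c·ε_approx − λ·ε_density. -/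

import Mathlib

open Filter Topology

lemma tele_summable {b : ℕ → ℝ} {c γ : ℝ} (hγ0 : 0 ≤ γ) (hγ1 : γ < 1)
    (hb : ∀ t, |b t| ≤ γ ^ t * c) :
    Summable (fun t => b t - b (t + 1)) := by
  have hsb : Summable b := by
    have : Summable (fun t : ℕ => γ ^ t * c) :=
      (summable_geometric_of_lt_one hγ0 hγ1).mul_right c
    exact this.of_norm_bounded (by simpa using hb)
  exact hsb.sub ((summable_nat_add_iff 1).2 hsb)

lemma tele_tsum {b : ℕ → ℝ} {c γ : ℝ} (hγ0 : 0 ≤ γ) (hγ1 : γ < 1)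
    (hb : ∀ t, |b t| ≤ γ ^ t * c) :
    ∑' t, (b t - b (t + 1)) = b 0 := by
  have hs := tele_summable hγ0 hγ1 hb
  have htend : Tendsto b atTop (𝓝 0) := by
    apply squeeze_zero_norm (fun t => by simpa using hb t)
    simpa using (tendsto_pow_atTop_nhds_zero_of_lt_one hγ0 hγ1).mul_const c
  have h1 := hs.hasSum.tendsto_sum_nat
  have h2 : Tendsto (fun n => ∑ i ∈ Finset.range n, (b i - b (i + 1))) atTop (𝓝 (b 0)) := by
    simp only [Finset.sum_range_sub']
    simpa using tendsto_const_nhds.sub htend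
  exact tendsto_nhds_unique h1 h2

lemma stoch_aux {S : Type*} [Fintype S] [DecidableEq S] (P : Matrix S S ℝ)
    (hP0 : ∀ x y, 0 ≤ P x y) (hP1 : ∀ x, ∑ y, P x y = 1)
    (μ : S → ℝ) (hμ0 : ∀ x, 0 ≤ μ x) (hμ1 : ∑ x, μ x = 1) (t : ℕ) :
    (∀ x, 0 ≤ Matrix.vecMul μ (P ^ t) x) ∧ ∑ x, Matrix.vecMul μ (P ^ t) x = 1 := by
  induction t with
  | zero => simpa [Matrix.vecMul_one] using ⟨hμ0, hμ1⟩
  | succ n ih =>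
    rw [pow_succ, ← Matrix.vecMul_vecMul]
    constructor
    · intro x
      simp only [Matrix.vecMul, dotProduct]
      exact Finset.sum_nonneg fun y _ => mul_nonneg (ih.1 y) (hP0 y x)
    · simp only [Matrix.vecMul, dotProduct]
      rw [Finset.sum_comm]
      simp only [← Finset.mul_sum]
      simp only [hP1]
      simpa [Matrix.vecMul, dotProduct] using ih.2

lemma inner_abs_le {S : Type*} [Fintype S] (ν : S → ℝ) (h0 : ∀ x, 0 ≤ ν x)
    (h1 : ∑ x, ν x = 1) (g : S → ℝ) (M : ℝ) (hg : ∀ x, |g x| ≤ M) :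
    |∑ x, ν x * g x| ≤ M := by
  calc |∑ x, ν x * g x| ≤ ∑ x, |ν x * g x| := Finset.abs_sum_le_sum_abs _ _
    _ = ∑ x, ν x * |g x| := by
        refine Finset.sum_congr rfl fun x _ => ?_
        rw [abs_mul, abs_of_nonneg (h0 x)]
    _ ≤ ∑ x, ν x * M :=
        Finset.sum_le_sum fun x _ => mul_le_mul_of_nonneg_left (hg x) (h0 x)
    _ = M := by rw [← Finset.sum_mul, h1, one_mul]

lemma swap_sum {S : Type*} [Fintype S] (P : Matrix S S ℝ) (ν g : S → ℝ) :
    ∑ x, Matrix.vecMul ν P x * g x = ∑ y, ν y * ∑ x, P y x * g x := by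
  simp only [Matrix.vecMul, dotProduct, Finset.sum_mul, Finset.mul_sum]
  rw [Finset.sum_comm]
  exact Finset.sum_congr rfl fun y _ => Finset.sum_congr rfl fun x _ => mul_assoc _ _ _

/-- Theorem 1 (Conservative Value Bound with Density Error). -/
theorem conservative_value_bound {S : Type*} [Fintype S] [DecidableEq S] [Nonempty S]
    (γ : ℝ) (hγ0 : 0 < γ) (hγ1 : γ < 1)
    (r_max : ℝ) (hr_max : 0 < r_max)
    (c : ℝ) (hc : c = r_max / (1 - γ))
    (T That : Matrix S S ℝ)
    (hT0 : ∀ x y, 0 ≤ T x y) (hT1 : ∀ x, ∑ y, T x y = 1)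
    (hThat0 : ∀ x y, 0 ≤ That x y) (hThat1 : ∀ x, ∑ y, That x y = 1)
    (r : S → ℝ) (hr : ∀ x, |r x| ≤ r_max)
    (μ₀ : S → ℝ) (hμ0 : ∀ x, 0 ≤ μ₀ x) (hμ1 : ∑ x, μ₀ x = 1)
    (V : S → ℝ) (hV : ∀ x, V x = r x + γ * ∑ y, T x y * V y)
    (hVbd : ∀ x, |V x| ≤ c)
    (u uhat : S → ℝ) (ε_density : ℝ) (hεd : 0 ≤ ε_density)
    (hu : ∀ x, |u x - uhat x| ≤ ε_density)
    (C : ℝ) (hC : 0 < C) (ε_approx : ℝ) (hεa : 0 ≤ ε_approx)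
    (hmodel : ∀ x, ∀ f : S → ℝ, (∀ y, |f y| ≤ 1) →
      |∑ y, (That x y - T x y) * f y| ≤ C * (∑ y, That x y * u y) + ε_approx)
    (lam : ℝ) (hlam : lam = γ * c * C)
    (rtil : S → ℝ) (hrtil : ∀ x, rtil x = r x - lam * ∑ y, That x y * uhat y)
    (ηM ηMtil : ℝ)
    (hηM : ηM = (1 - γ) * ∑' t : ℕ, γ ^ t * ∑ x, Matrix.vecMul μ₀ (T ^ t) x * r x)
    (hηMtil : ηMtil =
      (1 - γ) * ∑' t : ℕ, γ ^ t * ∑ x, Matrix.vecMul μ₀ (That ^ t) x * rtil x) :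
    ηM ≥ ηMtil - γ * c * ε_approx - lam * ε_density := by
  have h1γ : 0 < 1 - γ := by linarith
  have hc0 : 0 < c := by rw [hc]; positivity
  have hlam0 : 0 ≤ lam := by rw [hlam]; positivity
  set δ := γ * c * ε_approx + lam * ε_density with hδ
  -- exact Bellman rewriting of r
  have hrid : ∀ x, r x = V x - γ * ∑ y, T x y * V y := fun x => by linarith [hV x]
  -- key pointwise inequality for rtil
  have hkey : ∀ x, rtil x ≤ V x - γ * ∑ y, That x y * V y + δ := by
    intro x
    have hf : ∀ y, |V y / c| ≤ 1 := by
      intro y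
      rw [abs_div, abs_of_pos hc0, div_le_one hc0]
      exact hVbd y
    have hm := hmodel x (fun y => V y / c) hf
    have hsum : ∑ y, (That x y - T x y) * (V y / c) =
        (∑ y, (That x y - T x y) * V y) / c := by
      rw [Finset.sum_div]
      exact Finset.sum_congr rfl fun y _ => (mul_div_assoc _ _ _).symm
    rw [hsum, abs_div, abs_of_pos hc0, div_le_iff₀ hc0] at hm
    have hA : |∑ y, (That x y - T x y) * V y| ≤
        C * (∑ y, That x y * u y) * c + ε_approx * c := by linarith [hm]
    have hAle : γ * (∑ y, (That x y - T x y) * V y) ≤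
        lam * (∑ y, That x y * u y) + γ * c * ε_approx := by
      have h1 : ∑ y, (That x y - T x y) * V y ≤
          C * (∑ y, That x y * u y) * c + ε_approx * c := (abs_le.1 hA).2
      have := mul_le_mul_of_nonneg_left h1 hγ0.le
      rw [hlam]; nlinarith [this]
    have hdens : lam * (∑ y, That x y * u y) ≤
        lam * (∑ y, That x y * uhat y) + lam * ε_density := by
      have h2 : ∑ y, That x y * u y - ∑ y, That x y * uhat y ≤ ε_density := by
        rw [← Finset.sum_sub_distrib]
        calc ∑ y, (That x y * u y - That x y * uhat y)
            = ∑ y, That x y * (u y - uhat y) := by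
              exact Finset.sum_congr rfl fun y _ => by ring
          _ ≤ ∑ y, That x y * ε_density :=
              Finset.sum_le_sum fun y _ => mul_le_mul_of_nonneg_left
                (le_trans (le_abs_self _) (hu y)) (hThat0 x y)
          _ = ε_density := by rw [← Finset.sum_mul, hThat1, one_mul]
      nlinarith [mul_le_mul_of_nonneg_left h2 hlam0]
    have hTT : ∑ y, (That x y - T x y) * V y =
        (∑ y, That x y * V y) - ∑ y, T x y * V y := by
      rw [← Finset.sum_sub_distrib]
      exact Finset.sum_congr rfl fun y _ => by ring
    rw [hrtil x, hrid x]
    rw [hTT] at hAle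
    linarith [hAle, hdens]
  -- stochasticity of iterates
  have hμt := fun t => stoch_aux T hT0 hT1 μ₀ hμ0 hμ1 t
  have hνt := fun t => stoch_aux That hThat0 hThat1 μ₀ hμ0 hμ1 t
  set b : ℕ → ℝ := fun t => γ ^ t * ∑ x, Matrix.vecMul μ₀ (T ^ t) x * V x with hb
  set b' : ℕ → ℝ := fun t => γ ^ t * ∑ x, Matrix.vecMul μ₀ (That ^ t) x * V x with hb'
  have hb_bd : ∀ t, |b t| ≤ γ ^ t * c := by
    intro t
    rw [hb, abs_mul, abs_of_nonneg (pow_nonneg hγ0.le t)]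
    exact mul_le_mul_of_nonneg_left
      (inner_abs_le _ (hμt t).1 (hμt t).2 V c hVbd) (pow_nonneg hγ0.le t)
  have hb'_bd : ∀ t, |b' t| ≤ γ ^ t * c := by
    intro t
    rw [hb', abs_mul, abs_of_nonneg (pow_nonneg hγ0.le t)]
    exact mul_le_mul_of_nonneg_left
      (inner_abs_le _ (hνt t).1 (hνt t).2 V c hVbd) (pow_nonneg hγ0.le t)
  -- step identities
  have hstepT : ∀ t, ∑ x, Matrix.vecMul μ₀ (T ^ (t + 1)) x * V x =
      ∑ y, Matrix.vecMul μ₀ (T ^ t) y * ∑ x, T y x * V x := by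
    intro t
    rw [pow_succ, ← Matrix.vecMul_vecMul]
    exact swap_sum T _ V
  have hstepThat : ∀ t, ∑ x, Matrix.vecMul μ₀ (That ^ (t + 1)) x * V x =
      ∑ y, Matrix.vecMul μ₀ (That ^ t) y * ∑ x, That y x * V x := by
    intro t
    rw [pow_succ, ← Matrix.vecMul_vecMul]
    exact swap_sum That _ V
  -- exact telescoping for ηM terms
  have hbM : ∀ t, γ ^ t * ∑ x, Matrix.vecMul μ₀ (T ^ t) x * r x = b t - b (t + 1) := by
    intro t
    have e1 : ∑ x, Matrix.vecMul μ₀ (T ^ t) x * r x =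
        (∑ x, Matrix.vecMul μ₀ (T ^ t) x * V x)
          - γ * ∑ x, Matrix.vecMul μ₀ (T ^ t) x * ∑ y, T x y * V y := by
      rw [Finset.mul_sum, ← Finset.sum_sub_distrib]
      exact Finset.sum_congr rfl fun x _ => by rw [hrid x]; ring
    rw [e1, hb]
    simp only []
    rw [hstepT t]
    ring
  -- inequality telescoping for ηMtil terms
  have hbtil : ∀ t, γ ^ t * ∑ x, Matrix.vecMul μ₀ (That ^ t) x * rtil x ≤
      (b' t - b' (t + 1)) + γ ^ t * δ := by
    intro t
    have e2 : ∑ x, Matrix.vecMul μ₀ (That ^ t) x * rtil x ≤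
        (∑ x, Matrix.vecMul μ₀ (That ^ t) x * V x)
          - γ * (∑ x, Matrix.vecMul μ₀ (That ^ t) x * ∑ y, That x y * V y) + δ := by
      have : ∑ x, Matrix.vecMul μ₀ (That ^ t) x * rtil x ≤
          ∑ x, Matrix.vecMul μ₀ (That ^ t) x * (V x - γ * ∑ y, That x y * V y + δ) :=
        Finset.sum_le_sum fun x _ =>
          mul_le_mul_of_nonneg_left (hkey x) ((hνt t).1 x)
      refine le_trans this (le_of_eq ?_)
      have hx : ∀ x, Matrix.vecMul μ₀ (That ^ t) x * (V x - γ * ∑ y, That x y * V y + δ) =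
          Matrix.vecMul μ₀ (That ^ t) x * V x
            - γ * (Matrix.vecMul μ₀ (That ^ t) x * ∑ y, That x y * V y)
            + Matrix.vecMul μ₀ (That ^ t) x * δ := fun x => by ring
      rw [Finset.sum_congr rfl (fun x _ => hx x), Finset.sum_add_distrib,
        Finset.sum_sub_distrib, ← Finset.mul_sum, ← Finset.sum_mul, (hνt t).2, one_mul]
    calc γ ^ t * ∑ x, Matrix.vecMul μ₀ (That ^ t) x * rtil x
        ≤ γ ^ t * ((∑ x, Matrix.vecMul μ₀ (That ^ t) x * V x)
          - γ * (∑ x, Matrix.vecMul μ₀ (That ^ t) x * ∑ y, That x y * V y) + δ) :=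
          mul_le_mul_of_nonneg_left e2 (pow_nonneg hγ0.le t)
      _ = (b' t - b' (t + 1)) + γ ^ t * δ := by
          rw [hb']
          simp only []
          rw [hstepThat t]
          ring
  -- summabilities
  have hSumM : Summable (fun t : ℕ => γ ^ t * ∑ x, Matrix.vecMul μ₀ (T ^ t) x * r x) := by
    simp only [hbM]
    exact tele_summable hγ0.le hγ1 hb_bd
  have hTsumM : (∑' t : ℕ, γ ^ t * ∑ x, Matrix.vecMul μ₀ (T ^ t) x * r x) = b 0 := by
    simp only [hbM]
    exact tele_tsum hγ0.le hγ1 hb_bd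
  obtain ⟨x₀⟩ := ‹Nonempty S›
  set R := Finset.univ.sup' (Finset.univ_nonempty) (fun x => |rtil x|) with hR
  have hRle : ∀ x, |rtil x| ≤ R := fun x => Finset.le_sup' (fun x => |rtil x|) (Finset.mem_univ x)
  have hSumtil : Summable (fun t : ℕ => γ ^ t * ∑ x, Matrix.vecMul μ₀ (That ^ t) x * rtil x) := by
    have hgeo : Summable (fun t : ℕ => γ ^ t * R) :=
      (summable_geometric_of_lt_one hγ0.le hγ1).mul_right R
    refine hgeo.of_norm_bounded fun t => ?_
    rw [Real.norm_eq_abs, abs_mul, abs_of_nonneg (pow_nonneg hγ0.le t)]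
    exact mul_le_mul_of_nonneg_left
      (inner_abs_le _ (hνt t).1 (hνt t).2 rtil R hRle) (pow_nonneg hγ0.le t)
  have hSumUp : Summable (fun t : ℕ => (b' t - b' (t + 1)) + γ ^ t * δ) :=
    (tele_summable hγ0.le hγ1 hb'_bd).add
      ((summable_geometric_of_lt_one hγ0.le hγ1).mul_right δ)
  have hTsumUp : (∑' t : ℕ, ((b' t - b' (t + 1)) + γ ^ t * δ)) = b' 0 + (1 - γ)⁻¹ * δ := by
    rw [Summable.tsum_add (tele_summable hγ0.le hγ1 hb'_bd)
      ((summable_geometric_of_lt_one hγ0.le hγ1).mul_right δ)]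
    rw [tele_tsum hγ0.le hγ1 hb'_bd, tsum_mul_right,
      tsum_geometric_of_lt_one hγ0.le hγ1]
  have hTsumtil_le : (∑' t : ℕ, γ ^ t * ∑ x, Matrix.vecMul μ₀ (That ^ t) x * rtil x) ≤
      b' 0 + (1 - γ)⁻¹ * δ := by
    rw [← hTsumUp]
    exact Summable.tsum_le_tsum hbtil hSumtil hSumUp
  have hb0 : b 0 = b' 0 := by
    rw [hb, hb']
    simp [Matrix.vecMul_one]
  have hηM_eq : ηM = (1 - γ) * b 0 := by rw [hηM, hTsumM]
  have hηMtil_le : ηMtil ≤ (1 - γ) * b 0 + δ := by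
    rw [hηMtil, hb0]
    have := mul_le_mul_of_nonneg_left hTsumtil_le h1γ.le
    calc (1 - γ) * ∑' t : ℕ, γ ^ t * ∑ x, Matrix.vecMul μ₀ (That ^ t) x * rtil x
        ≤ (1 - γ) * (b' 0 + (1 - γ)⁻¹ * δ) := this
      _ = (1 - γ) * b' 0 + δ := by field_simp
  rw [hδ] at hηMtil_le
  linarith [hηM_eq, hηMtil_le]
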